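/- arXiv:2506.19876 — 15 statements merged into one kernel-verified Lean document; each statement's English description precedes it below -/
import Mathlib

section
/- Let R be a commutative ring with 1 ≠ 0 and characteristic 3, and let I be a proper ideal of R such that for each a ∈ R, a^3 ∈ I implies either a ∈ I or a^2 ∈ I. Then I is a cdf-absorbing ideal of R. -/
/-- A proper ideal `I` of a commutative ring `R` is a cubes-difference factor absorbing
ideal (cdf-absorbing ideal) if whenever `a^3 - b^3 ∈ I`, then `a - b ∈ I` or
`a^2 + a*b + b^2 ∈ I`. -/
def IsCdfAbsorbing {R : Type*} [CommRing R] (I : Ideal R) : Prop :=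
  I ≠ ⊤ ∧ ∀ a b : R, a ^ 3 - b ^ 3 ∈ I → a - b ∈ I ∨ a ^ 2 + a * b + b ^ 2 ∈ I

theorem stmt_3 {R : Type*} [CommRing R] [Nontrivial R] (hchar : (3 : R) = 0)
    (I : Ideal R) (hI : I ≠ ⊤)
    (h : ∀ a : R, a ^ 3 ∈ I → a ∈ I ∨ a ^ 2 ∈ I) : IsCdfAbsorbing I := by
  refine ⟨hI, fun a b hab => ?_⟩
  have key : (a - b) ^ 3 = a ^ 3 - b ^ 3 := by
    have : (a - b) ^ 3 - (a ^ 3 - b ^ 3) = (3 : R) * (a * b ^ 2 - a ^ 2 * b) := by ring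
    have := this
    rw [hchar, zero_mul, sub_eq_zero] at this
    exact this
  rcases h (a - b) (by rw [key]; exact hab) with h1 | h2
  · exact Or.inl h1
  · right
    have : a ^ 2 + a * b + b ^ 2 - (a - b) ^ 2 = (3 : R) * (a * b) := by ring
    rw [hchar, zero_mul, sub_eq_zero] at this
    rw [this]; exact h2
end

section
/- Let R be a commutative von Neumann regular ring with 1 ≠ 0 and characteristic 3. Then every proper ideal of R is a cdf-absorbing ideal of R. -/
theorem stmt_4 {R : Type*} [CommRing R] [Nontrivial R]
    (hvnr : ∀ a : R, ∃ x : R, a = a * x * a) (hchar : (3 : R) = 0)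
    (I : Ideal R) (hI : I ≠ ⊤) : IsCdfAbsorbing I := by
  refine ⟨hI, fun a b h => Or.inl ?_⟩
  have hcube : (a - b) ^ 3 ∈ I := by
    have : (a - b) ^ 3 = a ^ 3 - b ^ 3 + (b - a) * (a * b) * 3 := by ring
    rw [this, hchar]
    simpa using h
  obtain ⟨x, hx⟩ := hvnr (a - b)
  have : a - b = (a - b) ^ 3 * x ^ 2 := by
    linear_combination (1 + (a - b) * x) * hx
  rw [this]
  exact I.mul_mem_right _ hcube
end

section
/- Let R be a commutative ring with 1 ≠ 0 and I a cdf-absorbing ideal of R. Then the following are equivalent: (a) whenever a^3 - b^3 ∈ I for a, b ∈ R, both (a - b)^2 ∈ I and a^2 + a*b + b^2 ∈ I; (b) 3 ∈ I. -/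
theorem stmt_5 {R : Type*} [CommRing R] [Nontrivial R] (I : Ideal R)
    (hI : IsCdfAbsorbing I) :
    (∀ a b : R, a ^ 3 - b ^ 3 ∈ I → (a - b) ^ 2 ∈ I ∧ a ^ 2 + a * b + b ^ 2 ∈ I) ↔
      (3 : R) ∈ I := by
  constructor
  · intro h
    have := (h 1 1 (by simp)).2
    have e : (1:R)^2 + 1*1 + 1^2 = 3 := by ring
    rwa [e] at this
  · intro h3 a b hab
    have key : (a - b) ^ 2 - (a ^ 2 + a * b + b ^ 2) = -(3 * (a * b)) := by ring
    have h3ab : 3 * (a * b) ∈ I := I.mul_mem_right _ h3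
    rcases hI.2 a b hab with h | h
    · have h1 : (a - b) ^ 2 ∈ I := by
        have := I.mul_mem_left (a - b) h
        simpa [sq] using this
      refine ⟨h1, ?_⟩
      have : a ^ 2 + a * b + b ^ 2 = (a - b) ^ 2 + 3 * (a * b) := by ring
      rw [this]; exact I.add_mem h1 h3ab
    · refine ⟨?_, h⟩
      have : (a - b) ^ 2 = (a ^ 2 + a * b + b ^ 2) - 3 * (a * b) := by ring
      rw [this]; exact I.sub_mem h h3ab
end

section
/- Let R be a commutative ring with 1 ≠ 0 in which 3 is a unit, and let I be a proper ideal of R. Then I is a cdf-absorbing ideal of R if and only if I is a *-prime ideal of R. -/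
/-- A proper ideal `I` of `R` is a *-prime ideal if whenever
`b * (a^2 + a*b + b^2) ∈ I`, then `b ∈ I` or `a^2 + a*b + b^2 ∈ I`. -/
def IsStarPrime {R : Type*} [CommRing R] (I : Ideal R) : Prop :=
  I ≠ ⊤ ∧ ∀ a b : R, b * (a ^ 2 + a * b + b ^ 2) ∈ I → b ∈ I ∨ a ^ 2 + a * b + b ^ 2 ∈ I

theorem stmt_6 {R : Type*} [CommRing R] [Nontrivial R] (h3 : IsUnit (3 : R))
    (I : Ideal R) (hI : I ≠ ⊤) : IsCdfAbsorbing I ↔ IsStarPrime I := by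
  obtain ⟨c, hc⟩ := h3.exists_left_inv
  have hcancel : ∀ x : R, 3 * x ∈ I → x ∈ I := by
    intro x hx
    have : x = c * (3 * x) := by rw [← mul_assoc, hc, one_mul]
    rw [this]
    exact I.mul_mem_left c hx
  constructor
  · rintro ⟨-, h⟩
    refine ⟨hI, fun a b hab => ?_⟩
    have key : (a + 2 * b) ^ 3 - (a - b) ^ 3 ∈ I := by
      have e : (a + 2 * b) ^ 3 - (a - b) ^ 3 = 3 * (3 * (b * (a ^ 2 + a * b + b ^ 2))) := by
        ring
      rw [e]
      exact I.mul_mem_left _ (I.mul_mem_left _ hab)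
    rcases h _ _ key with h1 | h2
    · left
      have e : (a + 2 * b) - (a - b) = 3 * b := by ring
      rw [e] at h1
      exact hcancel b h1
    · right
      have e : (a + 2 * b) ^ 2 + (a + 2 * b) * (a - b) + (a - b) ^ 2
          = 3 * (a ^ 2 + a * b + b ^ 2) := by ring
      rw [e] at h2
      exact hcancel _ h2
  · rintro ⟨-, h⟩
    refine ⟨hI, fun a b hab => ?_⟩
    have key : (a - b) * ((a + 2 * b) ^ 2 + (a + 2 * b) * (a - b) + (a - b) ^ 2) ∈ I := by
      have e : (a - b) * ((a + 2 * b) ^ 2 + (a + 2 * b) * (a - b) + (a - b) ^ 2)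
          = 3 * (a ^ 3 - b ^ 3) := by ring
      rw [e]
      exact I.mul_mem_left _ hab
    rcases h _ _ key with h1 | h2
    · exact Or.inl h1
    · right
      have e : (a + 2 * b) ^ 2 + (a + 2 * b) * (a - b) + (a - b) ^ 2
          = 3 * (a ^ 2 + a * b + b ^ 2) := by ring
      rw [e] at h2
      exact hcancel _ h2
end

section
/- Let R be a commutative ring with 1 ≠ 0, I a cdf-absorbing ideal of R, and S a multiplicatively closed subset of R with I ∩ S = ∅. Then the localized ideal S⁻¹I is a cdf-absorbing ideal of the localization S⁻¹R. -/
theorem stmt_8 {R : Type*} [CommRing R] [Nontrivial R] (I : Ideal R)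
    (hI : IsCdfAbsorbing I) (S : Submonoid R) (hIS : (I : Set R) ∩ (S : Set R) = ∅) :
    IsCdfAbsorbing (I.map (algebraMap R (Localization S))) := by
  obtain ⟨hne, h⟩ := hI
  set L := Localization S
  constructor
  · intro htop
    have h1 : (1 : L) ∈ I.map (algebraMap R L) := htop ▸ Submodule.mem_top
    rw [show (1 : L) = IsLocalization.mk' L (1 : R) (1 : S) by
        rw [IsLocalization.mk'_one, map_one],
      IsLocalization.mk'_mem_map_algebraMap_iff S] at h1
    obtain ⟨u, huS, huI⟩ := h1
    rw [mul_one] at huI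
    exact Set.eq_empty_iff_forall_notMem.mp hIS u ⟨huI, huS⟩
  · intro a b hab
    obtain ⟨⟨x, s⟩, hx⟩ := IsLocalization.mk'_surjective S a
    obtain ⟨⟨y, t⟩, hy⟩ := IsLocalization.mk'_surjective S b
    have hs : a * algebraMap R L (s : R) = algebraMap R L x := by
      rw [← hx]; exact IsLocalization.mk'_spec L x s
    have ht : b * algebraMap R L (t : R) = algebraMap R L y := by
      rw [← hy]; exact IsLocalization.mk'_spec L y t
    -- rewrite a^3 - b^3 as mk'
    have hcube : a ^ 3 - b ^ 3 =
        IsLocalization.mk' L ((x * t) ^ 3 - (y * s) ^ 3) ((s * t) ^ 3) := by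
      rw [IsLocalization.eq_mk'_iff_mul_eq]
      simp only [SubmonoidClass.coe_pow, Submonoid.coe_mul, map_pow, map_mul, map_sub, map_add]
      rw [← hs, ← ht]
      ring
    rw [hcube, IsLocalization.mk'_mem_map_algebraMap_iff S] at hab
    obtain ⟨u, huS, huI⟩ := hab
    have key : (u * (x * t)) ^ 3 - (u * (y * s)) ^ 3 ∈ I := by
      have : u ^ 2 * (u * ((x * ↑t) ^ 3 - (y * ↑s) ^ 3)) ∈ I := I.mul_mem_left _ huI
      convert this using 1; ring
    rcases h _ _ key with hc | hc
    · left
      have hdiff : a - b = IsLocalization.mk' L (x * t - y * s) (s * t) := by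
        rw [IsLocalization.eq_mk'_iff_mul_eq]
        simp only [SubmonoidClass.coe_pow, Submonoid.coe_mul, map_pow, map_mul, map_sub, map_add]
        rw [← hs, ← ht]
        ring
      rw [hdiff, IsLocalization.mk'_mem_map_algebraMap_iff S]
      refine ⟨u, huS, ?_⟩
      convert hc using 1; ring
    · right
      have hsum : a ^ 2 + a * b + b ^ 2 =
          IsLocalization.mk' L ((x * t) ^ 2 + (x * t) * (y * s) + (y * s) ^ 2)
            ((s * t) ^ 2) := by
        rw [IsLocalization.eq_mk'_iff_mul_eq]
        simp only [SubmonoidClass.coe_pow, Submonoid.coe_mul, map_pow, map_mul, map_sub, map_add]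
        rw [← hs, ← ht]
        ring
      rw [hsum, IsLocalization.mk'_mem_map_algebraMap_iff S]
      refine ⟨u ^ 2, pow_mem huS 2, ?_⟩
      convert hc using 1; ring
end

section
/- Let f : R → T be a homomorphism of commutative rings (each with 1 ≠ 0) and J a cdf-absorbing ideal of T. Then f⁻¹(J) is a cdf-absorbing ideal of R. -/
theorem stmt_9 {R T : Type*} [CommRing R] [Nontrivial R] [CommRing T] [Nontrivial T]
    (f : R →+* T) (J : Ideal T) (hJ : IsCdfAbsorbing J) :
    IsCdfAbsorbing (J.comap f) := by
  obtain ⟨hne, h⟩ := hJ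
  constructor
  · intro htop
    apply hne
    rw [Ideal.eq_top_iff_one] at htop ⊢
    simpa using htop
  · intro a b hab
    have := h (f a) (f b) (by simpa [Ideal.mem_comap, map_sub, map_pow] using hab)
    rcases this with h1 | h2
    · left; simpa [Ideal.mem_comap, map_sub] using h1
    · right; simpa [Ideal.mem_comap, map_add, map_mul, map_pow] using h2
end

section
/- Let f : R → T be a surjective homomorphism of commutative rings (each with 1 ≠ 0) and I a cdf-absorbing ideal of R containing ker(f). Then the image f(I) is a cdf-absorbing ideal of T. -/
theorem stmt_10 {R T : Type*} [CommRing R] [Nontrivial R] [CommRing T] [Nontrivial T]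
    (f : R →+* T) (hf : Function.Surjective f) (I : Ideal R)
    (hI : IsCdfAbsorbing I) (hker : RingHom.ker f ≤ I) :
    IsCdfAbsorbing (I.map f) := by
  obtain ⟨hne, habs⟩ := hI
  have hmem : ∀ x : R, f x ∈ I.map f ↔ x ∈ I := by
    intro x
    constructor
    · intro hx
      obtain ⟨y, hy, hxy⟩ := (Ideal.mem_map_iff_of_surjective f hf).1 hx
      have : x - y ∈ RingHom.ker f := by
        simp [RingHom.mem_ker, map_sub, hxy]
      have := hker this
      have : x - y + y ∈ I := I.add_mem this hy
      simpa using this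
    · intro hx; exact Ideal.mem_map_of_mem f hx
  constructor
  · intro htop
    apply hne
    rw [Ideal.eq_top_iff_one]
    have : (1 : T) ∈ I.map f := htop ▸ Submodule.mem_top
    have := (hmem 1).1 (by simpa using this)
    exact this
  · intro a b hab
    obtain ⟨a', rfl⟩ := hf a
    obtain ⟨b', rfl⟩ := hf b
    have : a' ^ 3 - b' ^ 3 ∈ I := by
      apply (hmem _).1; push_cast [map_sub, map_pow]; exact hab
    rcases habs a' b' this with h | h
    · left
      have := (hmem _).2 h
      simpa [map_sub] using this
    · right
      have := (hmem _).2 h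
      simpa [map_add, map_mul, map_pow] using this
end

section
/- Let R ⊆ T be an extension of commutative rings (i.e., R is a subring of T, each with 1 ≠ 0) and J a cdf-absorbing ideal of T. Then J ∩ R is a cdf-absorbing ideal of R. -/
theorem stmt_11 {T : Type*} [CommRing T] [Nontrivial T] (R : Subring T) [Nontrivial R]
    (J : Ideal T) (hJ : IsCdfAbsorbing J) :
    IsCdfAbsorbing (J.comap R.subtype) := by
  obtain ⟨hne, h⟩ := hJ
  constructor
  · intro htop
    apply hne
    rw [Ideal.eq_top_iff_one] at htop ⊢
    simpa using htop
  · intro a b hab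
    have : (a : T) ^ 3 - (b : T) ^ 3 ∈ J := by
      simpa using hab
    rcases h a b this with h1 | h2
    · left; simpa using h1
    · right; simpa using h2
end

section
/- Let R be a commutative ring with 1 ≠ 0 and J ⊆ I be ideals of R with I proper. Then I/J is a cdf-absorbing ideal of the quotient ring R/J if and only if I is a cdf-absorbing ideal of R. -/
theorem stmt_12 {R : Type*} [CommRing R] [Nontrivial R] (I J : Ideal R) (hJI : J ≤ I)
    (hI : I ≠ ⊤) :
    IsCdfAbsorbing (I.map (Ideal.Quotient.mk J)) ↔ IsCdfAbsorbing I := by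
  have hmem : ∀ x : R, Ideal.Quotient.mk J x ∈ I.map (Ideal.Quotient.mk J) ↔ x ∈ I :=
    fun x => Ideal.mem_quotient_iff_mem hJI
  constructor
  · rintro ⟨-, h⟩
    refine ⟨hI, fun a b hab => ?_⟩
    have := h (Ideal.Quotient.mk J a) (Ideal.Quotient.mk J b) (by
      rw [← map_pow, ← map_pow, ← map_sub]; exact (hmem _).mpr hab)
    rcases this with h1 | h1
    · left; rw [← map_sub] at h1; exact (hmem _).mp h1
    · right
      rw [← map_pow, ← map_pow, ← map_mul, ← map_add, ← map_add] at h1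
      exact (hmem _).mp h1
  · rintro ⟨-, h⟩
    refine ⟨?_, ?_⟩
    · intro htop
      apply hI
      rw [Ideal.eq_top_iff_one]
      have h1 : Ideal.Quotient.mk J 1 ∈ I.map (Ideal.Quotient.mk J) := by
        rw [htop]; trivial
      exact (hmem 1).mp h1
    · intro a b hab
      obtain ⟨a, rfl⟩ := Ideal.Quotient.mk_surjective a
      obtain ⟨b, rfl⟩ := Ideal.Quotient.mk_surjective b
      rw [← map_pow, ← map_pow, ← map_sub] at hab
      rcases h a b ((hmem _).mp hab) with h1 | h1
      · left; rw [← map_sub]; exact (hmem _).mpr h1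
      · right; rw [← map_pow, ← map_pow, ← map_mul, ← map_add, ← map_add]
        exact (hmem _).mpr h1
end

section
/- Let R₁ and R₂ be commutative rings with 1 ≠ 0 and let I₁, I₂ be non-zero proper ideals of R₁, R₂ respectively. If I₁ × I₂ is a cdf-absorbing ideal of the product ring R₁ × R₂, then I₁ is a cdf-absorbing ideal of R₁ and I₂ is a cdf-absorbing ideal of R₂. -/
theorem stmt_13 {R₁ R₂ : Type*} [CommRing R₁] [Nontrivial R₁] [CommRing R₂] [Nontrivial R₂]
    (I₁ : Ideal R₁) (I₂ : Ideal R₂) (hI₁ : I₁ ≠ ⊥) (hI₁' : I₁ ≠ ⊤)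
    (hI₂ : I₂ ≠ ⊥) (hI₂' : I₂ ≠ ⊤)
    (h : IsCdfAbsorbing (I₁.prod I₂)) :
    IsCdfAbsorbing I₁ ∧ IsCdfAbsorbing I₂ := by
  obtain ⟨-, h2⟩ := h
  refine ⟨⟨hI₁', fun a b hab => ?_⟩, ⟨hI₂', fun a b hab => ?_⟩⟩
  · have := h2 (a, 0) (b, 0) (by
      simpa [Ideal.mem_prod, Prod.pow_fst, Prod.pow_snd] using hab)
    simpa [Ideal.mem_prod] using this
  · have := h2 (0, a) (0, b) (by
      simpa [Ideal.mem_prod, Prod.pow_fst, Prod.pow_snd] using hab)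
    simpa [Ideal.mem_prod] using this
end

section
/- Let R₁ and R₂ be commutative rings with 1 ≠ 0 and let I₁, I₂ be non-zero proper ideals of R₁, R₂ respectively such that I₁ × I₂ is a cdf-absorbing ideal of the product ring R₁ × R₂. If 3 ∉ I₂ and there exist a non-zero i ∈ I₁ and c ∈ R₁ with c^3 = i + 1, then c - 1 ∈ I₁. -/
theorem stmt_14 {R₁ R₂ : Type*} [CommRing R₁] [Nontrivial R₁] [CommRing R₂] [Nontrivial R₂]
    (I₁ : Ideal R₁) (I₂ : Ideal R₂) (hI₁ : I₁ ≠ ⊥) (hI₁' : I₁ ≠ ⊤)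
    (hI₂ : I₂ ≠ ⊥) (hI₂' : I₂ ≠ ⊤)
    (h : IsCdfAbsorbing (I₁.prod I₂)) (h3 : (3 : R₂) ∉ I₂)
    (i : R₁) (hi : i ∈ I₁) (hi0 : i ≠ 0) (c : R₁) (hc : c ^ 3 = i + 1) :
    c - 1 ∈ I₁ := by
  have key := h.2 (c, 1) (1, 1)
  have hmem : ((c, 1) : R₁ × R₂) ^ 3 - (1, 1) ^ 3 ∈ I₁.prod I₂ := by
    have : ((c, 1) : R₁ × R₂) ^ 3 - (1, 1) ^ 3 = (i, 0) := by
      ext <;> simp [hc] <;> ring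
    rw [this]
    exact (Ideal.mem_prod _ _).mpr ⟨hi, I₂.zero_mem⟩
  rcases key hmem with h1 | h2
  · exact ((Ideal.mem_prod _ _).mp h1).1
  · exfalso
    apply h3
    have := ((Ideal.mem_prod _ _).mp h2).2
    simpa [show (1:R₂) + 1 + 1 = 3 by ring] using this
end

section
/- Let R₁ and R₂ be commutative rings with 1 ≠ 0 and let I₁, I₂ be non-zero proper ideals of R₁, R₂ respectively such that I₁ is a cdf-absorbing ideal of R₁, I₂ is a cdf-absorbing ideal of R₂, and 3 ∈ I₂. Then for all a, b ∈ R₁ × R₂ with (a, b) ≠ ((0,0),(0,0)) and a^3 - b^3 ∈ I₁ × I₂, either a^2 + a*b + b^2 ∈ I₁ × I₂ or (a - b)^2 ∈ I₁ × I₂. -/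
theorem stmt_15 {R₁ R₂ : Type*} [CommRing R₁] [Nontrivial R₁] [CommRing R₂] [Nontrivial R₂]
    (I₁ : Ideal R₁) (I₂ : Ideal R₂) (hI₁ : I₁ ≠ ⊥) (hI₁' : I₁ ≠ ⊤)
    (hI₂ : I₂ ≠ ⊥) (hI₂' : I₂ ≠ ⊤)
    (h₁ : IsCdfAbsorbing I₁) (h₂ : IsCdfAbsorbing I₂) (h3 : (3 : R₂) ∈ I₂) :
    ∀ a b : R₁ × R₂, ¬(a = 0 ∧ b = 0) → a ^ 3 - b ^ 3 ∈ I₁.prod I₂ →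
      a ^ 2 + a * b + b ^ 2 ∈ I₁.prod I₂ ∨ (a - b) ^ 2 ∈ I₁.prod I₂ := by
  intro a b _ h
  rw [Ideal.mem_prod] at h
  obtain ⟨hA, hB⟩ := h
  simp only [Prod.fst_sub, Prod.pow_fst, Prod.snd_sub, Prod.pow_snd] at hA hB
  -- second component: a.2^2 + a.2*b.2 + b.2^2 ∈ I₂ always
  have hq2 : a.2 ^ 2 + a.2 * b.2 + b.2 ^ 2 ∈ I₂ := by
    rcases h₂.2 a.2 b.2 hB with hd | hq2
    · have heq : a.2 ^ 2 + a.2 * b.2 + b.2 ^ 2 = (a.2 - b.2) * (a.2 - b.2) + 3 * (a.2 * b.2) := by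
        ring
      rw [heq]
      exact I₂.add_mem (I₂.mul_mem_left _ hd) (I₂.mul_mem_right _ h3)
    · exact hq2
  have hs2 : (a.2 - b.2) ^ 2 ∈ I₂ := by
    have heq : (a.2 - b.2) ^ 2 = (a.2 ^ 2 + a.2 * b.2 + b.2 ^ 2) - 3 * (a.2 * b.2) := by ring
    rw [heq]
    exact I₂.sub_mem hq2 (I₂.mul_mem_right _ h3)
  rcases h₁.2 a.1 b.1 hA with hd | hq1
  · right
    rw [Ideal.mem_prod]
    refine ⟨?_, ?_⟩ <;> simp only [Prod.fst_sub, Prod.pow_fst, Prod.snd_sub, Prod.pow_snd]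
    · rw [sq]; exact I₁.mul_mem_left _ hd
    · exact hs2
  · left
    rw [Ideal.mem_prod]
    constructor <;>
      simp only [Prod.fst_add, Prod.fst_mul, Prod.pow_fst, Prod.snd_add, Prod.snd_mul,
        Prod.pow_snd]
    · exact hq1
    · exact hq2
end

section
/- Let R be a commutative ring with 1 ≠ 0, M an R-module, and I a non-zero cdf-absorbing ideal of R. Then I(+)M, the ideal of the idealization R(+)M consisting of all elements (i, m) with i ∈ I and m ∈ M, is a cdf-absorbing ideal of R(+)M. -/
theorem stmt_16 {R M : Type*} [CommRing R] [Nontrivial R] [AddCommGroup M] [Module R M]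
    [Module Rᵐᵒᵖ M] [IsCentralScalar R M]
    (I : Ideal R) (hI0 : I ≠ ⊥) (hI : IsCdfAbsorbing I) :
    IsCdfAbsorbing (I.comap (TrivSqZeroExt.fstHom R R M).toRingHom) := by
  obtain ⟨hne, h⟩ := hI
  constructor
  · intro htop
    apply hne
    rw [Ideal.eq_top_iff_one] at htop ⊢
    simpa [Ideal.mem_comap] using htop
  · intro a b hab
    rw [Ideal.mem_comap] at hab
    simp only [map_sub, map_pow] at hab
    rcases h _ _ hab with h1 | h2
    · left; simpa [Ideal.mem_comap] using h1
    · right; rw [Ideal.mem_comap]; simpa using h2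
end

section
/- Let R be a commutative ring with 1 ≠ 0 and M a non-zero R-module. Then {0}(+)M, the ideal of the idealization R(+)M consisting of all elements (0, m) with m ∈ M, is a cdf-absorbing ideal of R(+)M if and only if the zero ideal {0} of R is a 2-semi-absorbing ideal of R and {0} is a cdf-absorbing ideal of R. -/
theorem stmt_17 {R M : Type*} [CommRing R] [Nontrivial R] [AddCommGroup M] [Module R M]
    [Module Rᵐᵒᵖ M] [IsCentralScalar R M] [Nontrivial M] :
    IsCdfAbsorbing ((⊥ : Ideal R).comap (TrivSqZeroExt.fstHom R R M).toRingHom) ↔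
      (∀ x : R, x ^ 3 = 0 → x ^ 2 = 0) ∧ IsCdfAbsorbing (⊥ : Ideal R) := by
  have hmem : ∀ x : TrivSqZeroExt R M,
      x ∈ (⊥ : Ideal R).comap (TrivSqZeroExt.fstHom R R M).toRingHom ↔ x.fst = 0 := by
    intro x
    simp [Ideal.mem_comap, Ideal.mem_bot, TrivSqZeroExt.fstHom]
    exact Iff.rfl
  constructor
  · rintro ⟨_, h⟩
    have hcdf : IsCdfAbsorbing (⊥ : Ideal R) := by
      refine ⟨bot_ne_top, fun a b hab => ?_⟩
      have := h (TrivSqZeroExt.inl a) (TrivSqZeroExt.inl b)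
      simp only [hmem, TrivSqZeroExt.fst_sub, TrivSqZeroExt.fst_add, TrivSqZeroExt.fst_mul,
        TrivSqZeroExt.fst_pow, TrivSqZeroExt.fst_inl] at this
      simpa [Ideal.mem_bot] using this (by simpa [Ideal.mem_bot] using hab)
    refine ⟨fun x hx => ?_, hcdf⟩
    rcases hcdf.2 x 0 (by simpa [Ideal.mem_bot] using hx) with h1 | h1
    · simp only [Ideal.mem_bot, sub_zero] at h1
      simp [h1]
    · simpa [Ideal.mem_bot] using h1
  · rintro ⟨_, ⟨_, hcdf⟩⟩
    constructor
    · intro htop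
      have : (1 : TrivSqZeroExt R M) ∈ (⊥ : Ideal R).comap
          (TrivSqZeroExt.fstHom R R M).toRingHom := htop ▸ Submodule.mem_top
      simp [hmem] at this
    · intro a b hab
      rw [hmem] at hab
      simp only [TrivSqZeroExt.fst_sub, TrivSqZeroExt.fst_pow] at hab
      rcases hcdf a.fst b.fst (by simpa [Ideal.mem_bot] using hab) with h1 | h1 <;>
        simp only [Ideal.mem_bot] at h1
      · left
        rw [hmem]
        simpa [TrivSqZeroExt.fst_sub] using h1
      · right
        rw [hmem]
        simpa [TrivSqZeroExt.fst_add, TrivSqZeroExt.fst_mul, TrivSqZeroExt.fst_pow] using h1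
end

section
/- Let p be a prime number with p ≠ 3. Then the ideal 3pℤ of the ring of integers ℤ is a cdf-absorbing ideal of ℤ. -/
theorem stmt_19 (p : ℕ) (hp : p.Prime) (hp3 : p ≠ 3) :
    IsCdfAbsorbing (Ideal.span {(3 * (p : ℤ))}) := by
  have hpZ : Prime (p : ℤ) := Nat.prime_iff_prime_int.mp hp
  have h3Z : Prime (3 : ℤ) := Int.prime_three
  constructor
  · rw [Ne, Ideal.span_singleton_eq_top, Int.isUnit_iff]
    have hp1 : 1 < (p : ℤ) := by exact_mod_cast hp.one_lt
    push_neg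
    constructor <;> nlinarith
  · intro a b h
    rw [Ideal.mem_span_singleton] at h ⊢
    rw [Ideal.mem_span_singleton]
    have hfac : a ^ 3 - b ^ 3 = (a - b) * (a ^ 2 + a * b + b ^ 2) := by ring
    rw [hfac] at h
    have h3 : (3 : ℤ) ∣ (a - b) * (a ^ 2 + a * b + b ^ 2) := dvd_trans ⟨p, rfl⟩ h
    have hpd : (p : ℤ) ∣ (a - b) * (a ^ 2 + a * b + b ^ 2) := dvd_trans ⟨3, by ring⟩ h
    have h3ab : (3 : ℤ) ∣ a - b := by
      have : (3 : ℤ) ∣ (a - b) ^ 3 := by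
        have h2 : (a - b) ^ 3 = (a - b) * (a ^ 2 + a * b + b ^ 2) - 3 * (a * b * (a - b)) := by
          ring
        rw [h2]
        exact dvd_sub h3 ⟨a * b * (a - b), rfl⟩
      exact h3Z.dvd_of_dvd_pow this
    have h3s : (3 : ℤ) ∣ a ^ 2 + a * b + b ^ 2 := by
      have h2 : a ^ 2 + a * b + b ^ 2 = (a - b) * (a - b) + 3 * (a * b) := by ring
      rw [h2]
      exact dvd_add (h3ab.mul_right _) ⟨a * b, rfl⟩
    have hcop : IsCoprime (3 : ℤ) (p : ℤ) := by
      rw [Int.isCoprime_iff_gcd_eq_one]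
      simpa [Int.gcd] using (Nat.coprime_primes Nat.prime_three hp).mpr (Ne.symm hp3)
    rcases hpZ.dvd_mul.mp hpd with hpd | hpd
    · left
      exact hcop.mul_dvd h3ab hpd
    · right
      exact hcop.mul_dvd h3s hpd
end
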